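/- Let a, b > 0 and γ ∈ (1, 2), and set K = (a/b)^{1/(γ−1)}. Then for every real z ≥ −K one has |a(γ z + K) − b (z + K)^γ| ≤ a(γ−1) (b/a)^{1/(γ−1)} z². -/

import Mathlib

open Real

lemma key_16 (γ : ℝ) (hγ1 : 1 < γ) (hγ2 : γ < 2) (t : ℝ) (ht : 0 ≤ t) :
    |γ * t - (γ - 1) - t ^ γ| ≤ (γ - 1) * (t - 1) ^ 2 := by
  rcases eq_or_lt_of_le ht with h0 | h0
  · rw [← h0, Real.zero_rpow (by linarith)]
    rw [abs_of_nonpos (by linarith)]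
    nlinarith
  rw [abs_le]
  constructor
  · -- t^γ ≤ (γ-1) t² + (2-γ) t
    have hgm : (t ^ 2) ^ (γ - 1) * t ^ (2 - γ) ≤ (γ - 1) * t ^ 2 + (2 - γ) * t :=
      Real.geom_mean_le_arith_mean2_weighted (by linarith) (by linarith)
        (by positivity) ht (by ring)
    have heq : (t ^ 2) ^ (γ - 1) * t ^ (2 - γ) = t ^ γ := by
      rw [← Real.rpow_natCast t 2, ← Real.rpow_mul ht, ← Real.rpow_add h0]
      norm_num
      ring_nf
    nlinarith [hgm, heq]
  · -- γt - (γ-1) - t^γ ≤ 0 ≤ RHS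
    have hb : 1 + γ * (t - 1) ≤ (1 + (t - 1)) ^ γ :=
      one_add_mul_self_le_rpow_one_add (by linarith) hγ1.le
    have : (1 + (t - 1) : ℝ) = t := by ring
    rw [this] at hb
    nlinarith

theorem stmt_16 (a b γ : ℝ) (ha : 0 < a) (hb : 0 < b) (hγ1 : 1 < γ) (hγ2 : γ < 2)
    (K : ℝ) (hK : K = (a / b) ^ (1 / (γ - 1))) :
    ∀ z : ℝ, -K ≤ z →
      |a * (γ * z + K) - b * (z + K) ^ γ| ≤ a * (γ - 1) * (b / a) ^ (1 / (γ - 1)) * z ^ 2 := by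
  intro z hz
  have hγ' : γ - 1 ≠ 0 := by linarith
  have hK0 : 0 < K := by
    rw [hK]; exact Real.rpow_pos_of_pos (div_pos ha hb) _
  have hKpow : K ^ (γ - 1) = a / b := by
    rw [hK, ← Real.rpow_mul (div_pos ha hb).le, one_div, inv_mul_cancel₀ hγ', Real.rpow_one]
  have hinv : (b / a) ^ (1 / (γ - 1)) = K⁻¹ := by
    rw [hK, ← Real.rpow_neg_one ((a/b) ^ (1 / (γ-1))), ← Real.rpow_mul (div_pos ha hb).le]
    rw [show (b / a : ℝ) = (a / b)⁻¹ by field_simp]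
    rw [← Real.rpow_neg_one (a / b), ← Real.rpow_mul (div_pos ha hb).le]
    ring_nf
  set t : ℝ := (z + K) / K with hT
  have ht : 0 ≤ t := div_nonneg (by linarith) hK0.le
  have hzK : z + K = K * t := by rw [hT]; field_simp [hK0.ne']
  have hpow : (z + K) ^ γ = K ^ γ * t ^ γ := by
    rw [hzK, Real.mul_rpow hK0.le ht]
  have hbKγ : b * K ^ γ = a * K := by
    have h := Real.rpow_add hK0 (γ - 1) 1
    rw [Real.rpow_one] at h
    rw [show γ = γ - 1 + 1 by ring, h, hKpow]; field_simp
  have hmain := key_16 γ hγ1 hγ2 t ht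
  have hlhs : a * (γ * z + K) - b * (z + K) ^ γ
      = a * K * (γ * t - (γ - 1) - t ^ γ) := by
    rw [hpow]
    have hz' : z = K * t - K := by rw [← hzK]; ring
    rw [hz']
    linear_combination (-(t ^ γ)) * hbKγ
  rw [hlhs, abs_mul, abs_of_pos (by positivity : (0:ℝ) < a * K), hinv]
  have hz2 : z ^ 2 = K ^ 2 * (t - 1) ^ 2 := by
    have hz' : z = K * t - K := by rw [← hzK]; ring
    rw [hz']; ring
  rw [hz2]
  have : a * K * |γ * t - (γ - 1) - t ^ γ| ≤ a * K * ((γ - 1) * (t - 1) ^ 2) :=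
    mul_le_mul_of_nonneg_left hmain (by positivity)
  calc a * K * |γ * t - (γ - 1) - t ^ γ| ≤ a * K * ((γ - 1) * (t - 1) ^ 2) := this
    _ = a * (γ - 1) * K⁻¹ * (K ^ 2 * (t - 1) ^ 2) := by field_simp
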